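/- (Classical Plücker relation, maximal case k = m, with signs.) Let A ∈ ℝ^{m×n} with m ≤ n, let S, T ⊆ {1,…,n} with |S| = |T| = m, and fix j ∈ T \ S. Then there exist signs ε : S \ T → {−1, +1} such that det(A_{[m],S}) · det(A_{[m],T}) = Σ_{i ∈ S \ T} ε(i) · det(A_{[m], S Δ {i,j}}) · det(A_{[m], T Δ {i,j}}). -/

import Mathlib

open Finset

/-- The determinant of the maximal (`m × m`) submatrix of `A : ℝ^{m×n}` using all rows
and the columns in `S` (in increasing order); junk value `0` if `S.card ≠ m`. -/
noncomputable def colsDet {m n : ℕ} (A : Matrix (Fin m) (Fin n) ℝ)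
    (S : Finset (Fin n)) : ℝ :=
  if h : S.card = m then (A.submatrix id (S.orderEmbOfFin h)).det else 0

lemma exchange {m : ℕ} (B C : Matrix (Fin m) (Fin m) ℝ) (ℓ : Fin m) :
    B.det * C.det = ∑ k, (B.updateCol k (fun i => C i ℓ)).det *
      (C.updateCol ℓ (fun i => B i k)).det := by
  have hcr : ∀ v : Fin m → ℝ, (C.updateCol ℓ v).det = ∑ p, C.adjugate ℓ p * v p := by
    intro v
    rw [← Matrix.cramer_apply, Matrix.cramer_eq_adjugate_mulVec]
    rfl
  have hB : ∀ k, (B.updateCol k (fun i => C i ℓ)).det = Matrix.cramer B (fun i => C i ℓ) k :=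
    fun k => (Matrix.cramer_apply _ _ _).symm
  calc B.det * C.det
      = B.det * (C.updateCol ℓ (fun i => C i ℓ)).det := by rw [Matrix.updateCol_eq_self]
    _ = ∑ p, C.adjugate ℓ p * (B.det * C p ℓ) := by
        rw [hcr, Finset.mul_sum]; congr 1; ext p; ring
    _ = ∑ p, C.adjugate ℓ p * (Matrix.mulVec B (Matrix.cramer B (fun i => C i ℓ))) p := by
        rw [Matrix.mulVec_cramer]; rfl
    _ = ∑ p, ∑ k, C.adjugate ℓ p * (B p k * Matrix.cramer B (fun i => C i ℓ) k) := by
        congr 1; ext p; rw [Matrix.mulVec, dotProduct, Finset.mul_sum]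
    _ = ∑ k, (B.updateCol k (fun i => C i ℓ)).det *
          (C.updateCol ℓ (fun i => B i k)).det := by
        rw [Finset.sum_comm]
        refine Finset.sum_congr rfl fun k _ => ?_
        rw [hB, hcr, Finset.mul_sum]
        refine Finset.sum_congr rfl fun p _ => ?_
        ring

lemma det_submatrix_sign {m n : ℕ} (A : Matrix (Fin m) (Fin n) ℝ) (f : Fin m → Fin n)
    (hf : Function.Injective f) :
    ∃ c : ℝ, (c = 1 ∨ c = -1) ∧
      (A.submatrix id f).det = c * colsDet A (Finset.image f Finset.univ) := by
  have hcard : (Finset.image f Finset.univ).card = m := by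
    rw [Finset.card_image_of_injective _ hf, Finset.card_univ, Fintype.card_fin]
  set o := (Finset.image f Finset.univ).orderIsoOfFin hcard with ho
  have hmem : ∀ k, f k ∈ Finset.image f Finset.univ :=
    fun k => Finset.mem_image_of_mem f (Finset.mem_univ k)
  set σfun : Fin m → Fin m := fun k => o.symm ⟨f k, hmem k⟩ with hσfun
  have hσinj : Function.Injective σfun := by
    intro a b hab
    apply hf
    have := congrArg (fun x => ((o x : _) : Fin n)) hab
    simpa [σfun] using this
  have hσbij : Function.Bijective σfun := (Finite.injective_iff_bijective).mp hσinj
  set σ : Equiv.Perm (Fin m) := Equiv.ofBijective σfun hσbij with hσ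
  have hkey : ∀ k, (Finset.image f Finset.univ).orderEmbOfFin hcard (σ k) = f k := by
    intro k
    show ((Finset.image f Finset.univ).orderEmbOfFin hcard) (σfun k) = f k
    rw [← Finset.coe_orderIsoOfFin_apply]
    exact congrArg Subtype.val (o.apply_symm_apply ⟨f k, hmem k⟩)
  have hsub : A.submatrix id f =
      (A.submatrix id ((Finset.image f Finset.univ).orderEmbOfFin hcard)).submatrix id σ := by
    ext i k
    simp [Matrix.submatrix_apply, hkey k]
  refine ⟨((Equiv.Perm.sign σ : ℤ) : ℝ), ?_, ?_⟩
  · rcases Int.units_eq_one_or (Equiv.Perm.sign σ) with h | h <;> simp [h]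
  · rw [hsub, Matrix.det_permute', colsDet, dif_pos hcard]

lemma update_injective {m n : ℕ} (f : Fin m → Fin n) (hf : Function.Injective f)
    (k : Fin m) (y : Fin n) (hy : ∀ a, f a ≠ y) :
    Function.Injective (Function.update f k y) := by
  intro a b hab
  by_cases ha : a = k <;> by_cases hb : b = k
  · rw [ha, hb]
  · rw [ha, Function.update_self, Function.update_of_ne hb] at hab
    exact absurd hab.symm (hy b)
  · rw [hb, Function.update_self, Function.update_of_ne ha] at hab
    exact absurd hab (hy a)
  · rw [Function.update_of_ne ha, Function.update_of_ne hb] at hab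
    exact hf hab

lemma image_update {m n : ℕ} (f : Fin m → Fin n) (hf : Function.Injective f)
    (k : Fin m) (y : Fin n) :
    Finset.image (Function.update f k y) Finset.univ =
      insert y ((Finset.image f Finset.univ).erase (f k)) := by
  ext x
  simp only [Finset.mem_image, Finset.mem_univ, true_and, Finset.mem_insert, Finset.mem_erase]
  constructor
  · rintro ⟨a, ha⟩
    by_cases h : a = k
    · subst h; rw [Function.update_self] at ha; exact Or.inl ha.symm
    · rw [Function.update_of_ne h] at ha
      refine Or.inr ⟨?_, a, ha⟩
      rintro rfl
      exact h (hf ha)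
  · rintro (rfl | ⟨hne, a, ha⟩)
    · exact ⟨k, Function.update_self _ _ _⟩
    · have hak : a ≠ k := by rintro rfl; exact hne ha.symm
      exact ⟨a, by rw [Function.update_of_ne hak]; exact ha⟩

lemma symmDiff_pair {n : ℕ} (S : Finset (Fin n)) (i j : Fin n) (hi : i ∈ S) (hj : j ∉ S) :
    symmDiff S {i, j} = insert j (S.erase i) := by
  ext x
  simp only [Finset.mem_symmDiff, Finset.mem_insert, Finset.mem_erase, Finset.mem_singleton]
  constructor
  · rintro (⟨hxS, hx⟩ | ⟨(rfl | rfl), hxS⟩)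
    · push_neg at hx
      exact Or.inr ⟨hx.1, hxS⟩
    · exact absurd hi hxS
    · exact Or.inl rfl
  · rintro (rfl | ⟨hxi, hxS⟩)
    · exact Or.inr ⟨Or.inr rfl, hj⟩
    · exact Or.inl ⟨hxS, by push_neg; exact ⟨hxi, fun h => hj (h ▸ hxS)⟩⟩


/-- **Classical Plücker relation** (maximal case `k = m`, with signs): for column sets
`S, T` of size `m` and a fixed `j ∈ T \ S`, there exist signs `ε(i) ∈ {−1, +1}` with
`det A_{[m],S} * det A_{[m],T} = Σ_{i ∈ S \ T} ε(i) * det A_{[m], S Δ {i,j}} * det A_{[m], T Δ {i,j}}`. -/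
theorem plucker_maximal {m n : ℕ} (hmn : m ≤ n) (A : Matrix (Fin m) (Fin n) ℝ)
    (S T : Finset (Fin n)) (hS : S.card = m) (hT : T.card = m)
    (j : Fin n) (hj : j ∈ T \ S) :
    ∃ ε : Fin n → ℝ, (∀ i ∈ S \ T, ε i = 1 ∨ ε i = -1) ∧
      colsDet A S * colsDet A T =
        ∑ i ∈ S \ T, ε i * (colsDet A (symmDiff S {i, j}) * colsDet A (symmDiff T {i, j})) := by
  classical
  obtain ⟨hjT, hjS⟩ := Finset.mem_sdiff.mp hj
  have hm : 0 < m := by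
    rcases Nat.eq_zero_or_pos m with h | h
    · subst h
      rw [Finset.card_eq_zero] at hT
      subst hT
      exact absurd hjT (by simp)
    · exact h
  set s : Fin m → Fin n := fun k => S.orderEmbOfFin hS k with hs
  set t : Fin m → Fin n := fun k => T.orderEmbOfFin hT k with ht
  have hsinj : Function.Injective s := fun a b h => (S.orderEmbOfFin hS).injective h
  have htinj : Function.Injective t := fun a b h => (T.orderEmbOfFin hT).injective h
  have hsmem : ∀ k, s k ∈ S := fun k => Finset.orderEmbOfFin_mem S hS k
  have htmem : ∀ k, t k ∈ T := fun k => Finset.orderEmbOfFin_mem T hT k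
  have hsimg : Finset.image s Finset.univ = S := by
    ext x
    simp only [Finset.mem_image, Finset.mem_univ, true_and]
    constructor
    · rintro ⟨a, rfl⟩; exact hsmem a
    · intro hx
      have := Finset.range_orderEmbOfFin S hS
      have hx2 : x ∈ Set.range (S.orderEmbOfFin hS) := by rw [this]; exact hx
      obtain ⟨a, ha⟩ := hx2
      exact ⟨a, ha⟩
  have htimg : Finset.image t Finset.univ = T := by
    ext x
    simp only [Finset.mem_image, Finset.mem_univ, true_and]
    constructor
    · rintro ⟨a, rfl⟩; exact htmem a
    · intro hx
      have := Finset.range_orderEmbOfFin T hT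
      have hx2 : x ∈ Set.range (T.orderEmbOfFin hT) := by rw [this]; exact hx
      obtain ⟨a, ha⟩ := hx2
      exact ⟨a, ha⟩
  obtain ⟨ℓ, hℓ⟩ : ∃ ℓ, t ℓ = j := by
    have hx2 : j ∈ Set.range (T.orderEmbOfFin hT) := by
      rw [Finset.range_orderEmbOfFin T hT]; exact hjT
    obtain ⟨a, ha⟩ := hx2
    exact ⟨a, ha⟩
  set B : Matrix (Fin m) (Fin m) ℝ := A.submatrix id s with hB
  set C : Matrix (Fin m) (Fin m) ℝ := A.submatrix id t with hC
  set raw : Fin m → ℝ := fun k =>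
    (A.submatrix id (Function.update s k j)).det *
      (A.submatrix id (Function.update t ℓ (s k))).det with hraw
  have hBup : ∀ k, B.updateCol k (fun i => C i ℓ) = A.submatrix id (Function.update s k j) := by
    intro k
    ext i l
    by_cases h : l = k
    · subst h
      simp [Matrix.updateCol_apply, hC, hℓ]
    · simp [Matrix.updateCol_apply, if_neg h, Matrix.submatrix_apply,
        Function.update_of_ne h, hB]
  have hCup : ∀ k, C.updateCol ℓ (fun i => B i k) =
      A.submatrix id (Function.update t ℓ (s k)) := by
    intro k
    ext i l
    by_cases h : l = ℓ
    · subst h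
      simp [Matrix.updateCol_apply, hB]
    · simp [Matrix.updateCol_apply, if_neg h, Matrix.submatrix_apply,
        Function.update_of_ne h, hC]
  have h1 : colsDet A S * colsDet A T = ∑ k, raw k := by
    rw [colsDet, dif_pos hS, colsDet, dif_pos hT]
    rw [show (A.submatrix id (S.orderEmbOfFin hS)).det = B.det from rfl,
      show (A.submatrix id (T.orderEmbOfFin hT)).det = C.det from rfl,
      exchange B C ℓ]
    exact Finset.sum_congr rfl fun k _ => by rw [hBup k, hCup k]
  have h2 : ∀ k, s k ∈ T → raw k = 0 := by
    intro k hk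
    obtain ⟨p, hp⟩ : ∃ p, t p = s k := by
      have hx2 : s k ∈ Set.range (T.orderEmbOfFin hT) := by
        rw [Finset.range_orderEmbOfFin T hT]; exact hk
      obtain ⟨a, ha⟩ := hx2
      exact ⟨a, ha⟩
    have hpℓ : p ≠ ℓ := by
      rintro rfl
      rw [hℓ] at hp
      exact hjS (hp ▸ hsmem k)
    have : (A.submatrix id (Function.update t ℓ (s k))).det = 0 := by
      apply Matrix.det_zero_of_column_eq hpℓ.symm
      intro i
      simp [Matrix.submatrix_apply, Function.update_self, Function.update_of_ne hpℓ, hp]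
    rw [hraw]
    simp [this]
  have h3 : ∑ k, raw k = ∑ k ∈ Finset.univ.filter (fun k => s k ∈ S \ T), raw k := by
    refine (Finset.sum_filter_of_ne ?_).symm
    intro k _ hk
    rw [Finset.mem_sdiff]
    refine ⟨hsmem k, fun hkT => hk (h2 k hkT)⟩
  set inv : Fin n → Fin m := fun x =>
    if h : x ∈ S then (S.orderIsoOfFin hS).symm ⟨x, h⟩ else ⟨0, hm⟩ with hinvdef
  have hinv : ∀ k, inv (s k) = k := by
    intro k
    rw [hinvdef]
    simp only [hsmem k, dif_pos]
    have : (⟨s k, hsmem k⟩ : {x // x ∈ S}) = S.orderIsoOfFin hS k :=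
      Subtype.ext ((Finset.coe_orderIsoOfFin_apply S hS k).symm)
    rw [this, OrderIso.symm_apply_apply]
  have hsinv : ∀ x ∈ S, s (inv x) = x := by
    intro x hx
    rw [hinvdef]
    simp only [hx, dif_pos]
    show (S.orderEmbOfFin hS) _ = x
    rw [← Finset.coe_orderIsoOfFin_apply, OrderIso.apply_symm_apply]
  have h4 : ∑ k ∈ Finset.univ.filter (fun k => s k ∈ S \ T), raw k =
      ∑ i ∈ S \ T, raw (inv i) := by
    refine Finset.sum_nbij' s inv ?_ ?_ ?_ ?_ ?_
    · intro a ha; exact (Finset.mem_filter.mp ha).2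
    · intro i hi
      rw [Finset.mem_filter]
      have hiS := (Finset.mem_sdiff.mp hi).1
      exact ⟨Finset.mem_univ _, by rw [hsinv i hiS]; exact hi⟩
    · intro a _; exact hinv a
    · intro i hi; exact hsinv i (Finset.mem_sdiff.mp hi).1
    · intro a _; rw [hinv a]
  have h5 : ∀ i ∈ S \ T, ∃ c : ℝ, (c = 1 ∨ c = -1) ∧
      raw (inv i) = c * (colsDet A (symmDiff S {i, j}) * colsDet A (symmDiff T {i, j})) := by
    intro i hi
    obtain ⟨hiS, hiT⟩ := Finset.mem_sdiff.mp hi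
    have hk : s (inv i) = i := hsinv i hiS
    -- first factor
    have hinj1 : Function.Injective (Function.update s (inv i) j) :=
      update_injective s hsinj _ j (fun a ha => hjS (ha ▸ hsmem a))
    have himg1 : Finset.image (Function.update s (inv i) j) Finset.univ = symmDiff S {i, j} := by
      rw [image_update s hsinj, hsimg, hk, symmDiff_pair S i j hiS hjS]
    obtain ⟨c1, hc1, hd1⟩ := det_submatrix_sign A (Function.update s (inv i) j) hinj1
    rw [himg1] at hd1
    -- second factor
    have hinj2 : Function.Injective (Function.update t ℓ i) :=
      update_injective t htinj _ i (fun a ha => hiT (ha ▸ htmem a))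
    have himg2 : Finset.image (Function.update t ℓ i) Finset.univ = symmDiff T {i, j} := by
      rw [image_update t htinj, htimg, hℓ, Finset.pair_comm,
        symmDiff_pair T j i hjT hiT]
    obtain ⟨c2, hc2, hd2⟩ := det_submatrix_sign A (Function.update t ℓ i) hinj2
    rw [himg2] at hd2
    refine ⟨c1 * c2, ?_, ?_⟩
    · rcases hc1 with rfl | rfl <;> rcases hc2 with rfl | rfl <;> simp
    · rw [hraw]
      simp only
      rw [hk, hd1, hd2]
      ring
  refine ⟨fun i => if h : i ∈ S \ T then (h5 i h).choose else 1, ?_, ?_⟩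
  · intro i hi
    simp only [dif_pos hi]
    exact (h5 i hi).choose_spec.1
  · rw [h1, h3, h4]
    refine Finset.sum_congr rfl fun i hi => ?_
    simp only [dif_pos hi]
    exact (h5 i hi).choose_spec.2
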